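/- Let X, Z be finite nonempty types and Y a finite additive abelian group, let B ⊆ X be a subset, and let P : X → Y be a function with P x = 0 for all x ∉ B. Let O_P be the oracle unitary for P on H = EuclideanSpace ℂ (X × Y × Z), and let Π_B be the orthogonal projection onto the span of the standard basis vectors e_{(x,y,z)} with x ∈ B. Then for every vector φ ∈ H, ‖φ − O_P φ‖ ≤ 2·‖Π_B φ‖. -/

import Mathlib

noncomputable section

/-- The oracle unitary for a function `P : X → Y`: the permutation unitary induced on
standard basis vectors by `(x, y, z) ↦ (x, y + P x, z)`. -/
def oracleOp {X Y Z : Type*} [Fintype X] [Fintype Y] [Fintype Z] [AddCommGroup Y]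
    (P : X → Y) :
    EuclideanSpace ℂ (X × Y × Z) →L[ℂ] EuclideanSpace ℂ (X × Y × Z) :=
  LinearMap.toContinuousLinearMap
    { toFun := fun ψ => (WithLp.toLp 2 (fun p : X × Y × Z => ψ (p.1, p.2.1 - P p.1, p.2.2)) : EuclideanSpace ℂ (X × Y × Z))
      map_add' := fun _ _ => rfl
      map_smul' := fun _ _ => rfl }

/-- `Π_B φ`: the orthogonal projection of `φ` onto the span of the standard basis vectors
`e_(x,w)` with `x ∈ B`. -/
def projVec {X W : Type*} (B : Set X) [DecidablePred (· ∈ B)]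
    (φ : EuclideanSpace ℂ (X × W)) : EuclideanSpace ℂ (X × W) :=
  WithLp.toLp 2 (fun p : X × W => if p.1 ∈ B then φ p else 0)

theorem oracleOp_norm_eq {X Y Z : Type*} [Fintype X] [Fintype Y] [Fintype Z] [AddCommGroup Y]
    (P : X → Y) (ψ : EuclideanSpace ℂ (X × Y × Z)) :
    ‖oracleOp P ψ‖ = ‖ψ‖ := by
  rw [EuclideanSpace.norm_eq, EuclideanSpace.norm_eq]
  congr 1
  exact Fintype.sum_equiv
    (Equiv.prodCongr (Equiv.refl X) (Equiv.prodCongr (Equiv.refl Y) (Equiv.refl Z)) |>.trans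
      ⟨fun p => (p.1, p.2.1 - P p.1, p.2.2), fun p => (p.1, p.2.1 + P p.1, p.2.2),
        fun p => by simp, fun p => by simp⟩) _ _ (fun p => by simp [oracleOp, LinearMap.coe_mk, AddHom.coe_mk]; rfl)

/-- If `P : X → Y` vanishes outside `B`, then for every vector `φ`,
`‖φ - O_P φ‖ ≤ 2 ‖Π_B φ‖`. -/
theorem norm_sub_oracle_le
    {X Y Z : Type*} [Fintype X] [Nonempty X] [Fintype Z] [Nonempty Z]
    [Fintype Y] [AddCommGroup Y]
    (B : Set X) [DecidablePred (· ∈ B)]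
    (P : X → Y) (hP : ∀ x, x ∉ B → P x = 0)
    (φ : EuclideanSpace ℂ (X × Y × Z)) :
    ‖φ - oracleOp P φ‖ ≤ 2 * ‖projVec B φ‖ := by
  have key : φ - oracleOp P φ = projVec B φ - oracleOp P (projVec B φ) := by
    ext p
    obtain ⟨x, y, z⟩ := p
    have h1 : (φ - oracleOp P φ) (x, y, z) = φ (x, y, z) - φ (x, y - P x, z) := rfl
    have h2 : (projVec B φ - oracleOp P (projVec B φ)) (x, y, z)
        = (if x ∈ B then φ (x, y, z) else 0) - (if x ∈ B then φ (x, y - P x, z) else 0) := rfl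
    rw [h1, h2]
    by_cases hx : x ∈ B
    · simp [hx]
    · rw [hP x hx, sub_zero, sub_self]; simp [hx]
  rw [key]
  calc ‖projVec B φ - oracleOp P (projVec B φ)‖
      ≤ ‖projVec B φ‖ + ‖oracleOp P (projVec B φ)‖ := norm_sub_le _ _
    _ = 2 * ‖projVec B φ‖ := by rw [oracleOp_norm_eq]; ring

end
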